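/- Let ψ be an EAM mechanism and φ an individually rational mechanism. For any problem P, if P' and P'' are Nash equilibria under ψ and φ respectively and |ψ(P')| < |φ(P'')|, then there exists a student i with ψ_i(P') P_i φ_i(P'') P_i ∅ (i is strictly better off under the EAM equilibrium outcome, which is itself acceptable-strictly above the φ outcome, which is acceptable). -/

import Mathlib

open Finset
open scoped Classical

/-- A matching assigns each student a school or `none` (unassigned). -/
abbrev Matching (I S : Type*) := I → Option S

/-- An individual strict preference over `S ∪ {∅}`: an injective utility
function on `Option S` (higher value = more preferred, `none` = being
unassigned). -/
abbrev IndPref (S : Type*) := {f : Option S → ℕ // Function.Injective f}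

/-- A preference profile: one strict preference per student. -/
abbrev Prof (I S : Type*) := I → IndPref S

/-- Strict school priorities: for each school, an injective rank over
students (higher value = higher priority). -/
abbrev Prio (I S : Type*) := {p : S → I → ℕ // ∀ s, Function.Injective (p s)}

/-- A mechanism maps reported preference profiles to matchings. -/
abbrev Mechanism (I S : Type*) := Prof I S → Matching I S

variable {I S : Type*} [Fintype I] [DecidableEq I] [Fintype S] [DecidableEq S]

/-- Capacity feasibility. -/
def Feasible (q : S → ℕ) (μ : Matching I S) : Prop :=
  ∀ s : S, (univ.filter fun i => μ i = some s).card ≤ q s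

/-- Individual rationality with respect to profile `P`. -/
def IndivRational (P : Prof I S) (μ : Matching I S) : Prop :=
  ∀ i, (P i).1 none ≤ (P i).1 (μ i)

/-- Number of assigned students. -/
def msize (μ : Matching I S) : ℕ := (univ.filter fun i => μ i ≠ none).card

/-- Maximality: no feasible individually rational matching assigns strictly
more students. -/
def MaximalMatching (P : Prof I S) (q : S → ℕ) (μ : Matching I S) : Prop :=
  ∀ μ' : Matching I S, Feasible q μ' → IndivRational P μ' → msize μ' ≤ msize μ

/-- `μ'` Pareto dominates `μ`. -/
def Dominates (P : Prof I S) (μ' μ : Matching I S) : Prop :=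
  (∀ i, (P i).1 (μ i) ≤ (P i).1 (μ' i)) ∧ ∃ j, (P j).1 (μ j) < (P j).1 (μ' j)

/-- Pareto efficiency among feasible individually rational matchings. -/
def Efficient (P : Prof I S) (q : S → ℕ) (μ : Matching I S) : Prop :=
  ¬ ∃ μ', Feasible q μ' ∧ IndivRational P μ' ∧ Dominates P μ' μ

/-- Non-wastefulness. -/
def NonWasteful (P : Prof I S) (q : S → ℕ) (μ : Matching I S) : Prop :=
  ∀ i s, (P i).1 (μ i) < (P i).1 (some s) →
    (univ.filter fun j => μ j = some s).card = q s

/-- Fairness (no justified envy). -/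
def Fair (P : Prof I S) (pr : Prio I S) (μ : Matching I S) : Prop :=
  ¬ ∃ i s j, (P i).1 (μ i) < (P i).1 (some s) ∧ μ j = some s ∧ pr.1 s j < pr.1 s i

/-- Stability: individually rational, non-wasteful and fair. -/
def Stable (P : Prof I S) (pr : Prio I S) (q : S → ℕ) (μ : Matching I S) : Prop :=
  Feasible q μ ∧ IndivRational P μ ∧ NonWasteful P q μ ∧ Fair P pr μ

/-- Fairness for unassigned students. -/
def FairForUnassigned (P : Prof I S) (pr : Prio I S) (μ : Matching I S) : Prop :=
  ¬ ∃ i s j, μ i = none ∧ (P i).1 none < (P i).1 (some s) ∧ μ j = some s ∧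
    pr.1 s j < pr.1 s i

/-- `(a, t)` is an improving chain for `μ`: each student `a k` strictly
prefers `t k` to their assignment, each school `t k` (for `k < n`) is
currently occupied by the next student `a (k+1)`, and the last school has
excess capacity. -/
def IsImpChain (P : Prof I S) (q : S → ℕ) (μ : Matching I S)
    (n : ℕ) (a : Fin (n + 1) → I) (t : Fin (n + 1) → S) : Prop :=
  Function.Injective a ∧
  (∀ k, (P (a k)).1 (μ (a k)) < (P (a k)).1 (some (t k))) ∧
  (∀ k : Fin n, μ (a k.succ) = some (t k.castSucc)) ∧
  (univ.filter fun j => μ j = some (t (Fin.last n))).card < q (t (Fin.last n))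

/-- `(a, t)` is an improving cycle for `μ`: each student `a k` is assigned
to `t k` and strictly prefers the school `t (k+1)` vacated by the next
student in the cycle. -/
def IsImpCycle (P : Prof I S) (μ : Matching I S)
    (n : ℕ) (a : Fin (n + 1) → I) (t : Fin (n + 1) → S) : Prop :=
  Function.Injective a ∧
  (∀ k, μ (a k) = some (t k)) ∧
  (∀ k, (P (a k)).1 (some (t k)) < (P (a k)).1 (some (t (k + 1))))

def HasImpChain (P : Prof I S) (q : S → ℕ) (μ : Matching I S) : Prop :=
  ∃ n a t, IsImpChain P q μ n a t

def HasImpCycle (P : Prof I S) (μ : Matching I S) : Prop :=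
  ∃ n a t, IsImpCycle P μ n a t

/-- Implementing one improving chain or cycle: every student involved moves
to the school they prefer in the chain/cycle, all others keep their
assignment. -/
def ImplementStep (P : Prof I S) (q : S → ℕ) (μ μ' : Matching I S) : Prop :=
  (∃ n a t, IsImpChain P q μ n a t ∧ (∀ k, μ' (a k) = some (t k)) ∧
    ∀ j, (∀ k, j ≠ a k) → μ' j = μ j) ∨
  (∃ n a t, IsImpCycle P μ n a t ∧ (∀ k, μ' (a k) = some (t (k + 1))) ∧
    ∀ j, (∀ k, j ≠ a k) → μ' j = μ j)

/-- One refinement step of the first stage of EAM: keep only the matchings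
assigning student `i`, whenever such matchings exist. -/
noncomputable def xiStep (A : Set (Matching I S)) (i : I) : Set (Matching I S) :=
  if ∃ μ ∈ A, μ i ≠ none then {μ ∈ A | μ i ≠ none} else A

/-- The set `ξ^n` of the first stage of EAM, for the enumeration `L` of the
students, starting from all feasible individually rational matchings. -/
noncomputable def xiList (P : Prof I S) (q : S → ℕ) (L : List I) :
    Set (Matching I S) :=
  L.foldl xiStep {μ | Feasible q μ ∧ IndivRational P μ}

/-- `μ` is a possible outcome of an EAM procedure with student enumeration
`L`: it is reachable from some matching selected in the first stage by
implementing improving chains/cycles, and admits no further improving chain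
or cycle. -/
def IsEAMOutcome (P : Prof I S) (q : S → ℕ) (L : List I) (μ : Matching I S) :
    Prop :=
  ∃ μ₀ ∈ xiList P q L, Relation.ReflTransGen (ImplementStep P q) μ₀ μ ∧
    ¬ HasImpChain P q μ ∧ ¬ HasImpCycle P μ

/-- EAM mechanisms with enumeration `L`. -/
def IsEAMMech (q : S → ℕ) (L : List I) (ψ : Mechanism I S) : Prop :=
  ∀ P, IsEAMOutcome P q L (ψ P)

/-- One sub-step of Step 2 of FAM: a pair `(i, s)` violating fairness for
unassigned students is resolved by placing `i` at `s` and unassigning the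
lowest-priority student currently matched to `s`. -/
def FairStep (P : Prof I S) (pr : Prio I S) (μ μ' : Matching I S) : Prop :=
  ∃ i s j, μ i = none ∧ (P i).1 none < (P i).1 (some s) ∧ μ j = some s ∧
    pr.1 s j < pr.1 s i ∧ (∀ j', μ j' = some s → pr.1 s j ≤ pr.1 s j') ∧
    μ' = Function.update (Function.update μ j none) i (some s)

/-- FAM mechanisms: an EAM first stage followed by iterated resolution of
violations of fairness for unassigned students. -/
def IsFAMMech (q : S → ℕ) (pr : Prio I S) (L : List I) (ψ : Mechanism I S) :
    Prop :=
  ∀ P, ∃ μ₁, IsEAMOutcome P q L μ₁ ∧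
    Relation.ReflTransGen (FairStep P pr) μ₁ (ψ P) ∧
    FairForUnassigned P pr (ψ P)

/-- Individually rational mechanism (with respect to reports). -/
def IRMech (q : S → ℕ) (ψ : Mechanism I S) : Prop :=
  ∀ P, Feasible q (ψ P) ∧ IndivRational P (ψ P)

/-- MaximalMatching mechanism. -/
def MaximalMech (q : S → ℕ) (ψ : Mechanism I S) : Prop :=
  IRMech q ψ ∧ ∀ P, MaximalMatching P q (ψ P)

/-- Nash equilibrium of the preference-reporting game induced by `ψ`, with
true preferences `u`. -/
def NashEq (u : Prof I S) (ψ : Mechanism I S) (P' : Prof I S) : Prop :=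
  ∀ (i : I) (Pi'' : IndPref S),
    (u i).1 (ψ (Function.update P' i Pi'') i) ≤ (u i).1 (ψ P' i)

/-- Strategy-proofness. -/
def StrategyProof (ψ : Mechanism I S) : Prop :=
  ∀ (P : Prof I S) (i : I) (Pi' : IndPref S),
    (P i).1 (ψ (Function.update P i Pi') i) ≤ (P i).1 (ψ P i)

/-- A maximizer of `f` on the nonempty finite set `A`. -/
noncomputable def bestOf (f : Option S → ℕ) (A : Finset (Option S))
    (h : A.Nonempty) : Option S :=
  (Finset.exists_max_image A f h).choose

/-- Serial dictatorship: students pick, in the order given, their most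
preferred option among `none` and the schools with remaining capacity. -/
noncomputable def sdRun (P : Prof I S) :
    List I → (S → ℕ) → Matching I S → Matching I S
  | [], _, μ => μ
  | i :: rest, rem, μ =>
    let c := bestOf (P i).1 (insert none ((univ.filter fun s => 0 < rem s).image some))
      (insert_nonempty _ _)
    sdRun P rest (fun s => if c = some s then rem s - 1 else rem s)
      (Function.update μ i c)

/-- The serial dictatorship outcome with ordering `L` and capacities `q`. -/
noncomputable def SD (P : Prof I S) (q : S → ℕ) (L : List I) : Matching I S :=
  sdRun P L q fun _ => none


variable {I S : Type*} [Fintype I] [DecidableEq I] [Fintype S] [DecidableEq S]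

/-! ### Auxiliary machinery for STATEMENT 10 -/

/-- A report declaring every school unacceptable. -/
noncomputable def nonePref : IndPref S :=
  ⟨fun o => match o with
    | none => Fintype.card S
    | some t => (Fintype.equivFin S t : ℕ), by
    rintro (_ | t) (_ | t') h
    · rfl
    · exact absurd h.symm (Fintype.equivFin S t').isLt.ne
    · exact absurd h (Fintype.equivFin S t).isLt.ne
    · exact congrArg some ((Fintype.equivFin S).injective (Fin.val_injective h))⟩

lemma nonePref_lt (t : S) :
    (nonePref : IndPref S).1 (some t) < (nonePref : IndPref S).1 none :=
  (Fintype.equivFin S t).isLt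

/-- A report declaring only the school `s` acceptable. -/
noncomputable def onlyPref (s : S) : IndPref S :=
  ⟨fun o => match o with
    | none => Fintype.card S
    | some t => if t = s then Fintype.card S + 1 else (Fintype.equivFin S t : ℕ), by
    have hv : ∀ t : S, ((Fintype.equivFin S t : ℕ)) < Fintype.card S :=
      fun t => (Fintype.equivFin S t).isLt
    rintro (_ | t) (_ | t') h <;> simp only at h
    · rfl
    · exfalso; by_cases h' : t' = s
      · rw [if_pos h'] at h; omega
      · rw [if_neg h'] at h; exact absurd h (hv t').ne'
    · exfalso; by_cases h' : t = s
      · rw [if_pos h'] at h; omega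
      · rw [if_neg h'] at h; exact absurd h (hv t).ne
    · by_cases h1 : t = s <;> by_cases h2 : t' = s
      · rw [h1, h2]
      · exfalso; rw [if_pos h1, if_neg h2] at h; have := hv t'; omega
      · exfalso; rw [if_neg h1, if_pos h2] at h; have := hv t; omega
      · rw [if_neg h1, if_neg h2] at h
        exact congrArg some ((Fintype.equivFin S).injective (Fin.val_injective h))⟩

lemma onlyPref_none_lt (s : S) :
    (onlyPref s).1 none < (onlyPref s).1 (some s) := by
  show Fintype.card S < if s = s then Fintype.card S + 1 else _
  rw [if_pos rfl]; omega

lemma onlyPref_other_lt (s c : S) (h : c ≠ s) :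
    (onlyPref s).1 (some c) < (onlyPref s).1 none := by
  show (if c = s then _ else ((Fintype.equivFin S c : ℕ))) < Fintype.card S
  rw [if_neg h]; exact (Fintype.equivFin S c).isLt

lemma msize_eq_sum (μ : Matching I S) :
    msize μ = ∑ s : S, (univ.filter fun i => μ i = some s).card := by
  unfold msize
  rw [Finset.card_filter]
  have hcf : ∀ s : S, (univ.filter fun i => μ i = some s).card
      = ∑ i : I, if μ i = some s then 1 else 0 := fun s => Finset.card_filter _ _
  simp_rw [hcf]
  rw [Finset.sum_comm]
  refine Finset.sum_congr rfl fun i _ => ?_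
  cases h : μ i with
  | none => simp [h]
  | some c => simp [h, Finset.sum_ite_eq]

/-- The sets arising in the first stage of EAM. -/
def EAMSSet (P : Prof I S) (q : S → ℕ) (K : Finset I) : Set (Matching I S) :=
  {μ | Feasible q μ ∧ IndivRational P μ ∧ ∀ k ∈ K, μ k ≠ none}

lemma SSet_empty (P : Prof I S) (q : S → ℕ) :
    {μ : Matching I S | Feasible q μ ∧ IndivRational P μ} = EAMSSet P q ∅ := by
  ext μ; simp [EAMSSet]

lemma feasible_update_none {q : S → ℕ} {μ : Matching I S} (h : Feasible q μ) (i : I) :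
    Feasible q (Function.update μ i none) := by
  intro s
  refine le_trans (Finset.card_le_card fun j hj => ?_) (h s)
  simp only [Finset.mem_filter, Finset.mem_univ, true_and] at hj ⊢
  rcases eq_or_ne j i with rfl | hne
  · rw [Function.update_self] at hj; exact absurd hj (by simp)
  · rwa [Function.update_of_ne hne] at hj

lemma mem_SSet_update_none {P Q : Prof I S} {q : S → ℕ} {i : I}
    (hPQ : ∀ j, j ≠ i → P j = Q j) {K : Finset I} (hiK : i ∉ K)
    {μ : Matching I S} (hμ : μ ∈ EAMSSet P q K) :
    Function.update μ i none ∈ EAMSSet Q q K := by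
  obtain ⟨hf, hir, hK⟩ := hμ
  refine ⟨feasible_update_none hf i, fun j => ?_, fun k hk => ?_⟩
  · rcases eq_or_ne j i with rfl | hne
    · rw [Function.update_self]
    · rw [Function.update_of_ne hne, ← hPQ j hne]; exact hir j
  · have hk' : k ≠ i := fun h => hiK (h ▸ hk)
    rw [Function.update_of_ne hk']; exact hK k hk

lemma xiStep_SSet_pos (P : Prof I S) (q : S → ℕ) (K : Finset I) (j : I)
    (h : ∃ μ ∈ EAMSSet P q K, μ j ≠ none) :
    xiStep (EAMSSet P q K) j = EAMSSet P q (insert j K) := by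
  unfold xiStep
  rw [if_pos h]
  ext μ
  constructor
  · rintro ⟨⟨hf, hir, hK⟩, hj⟩
    exact ⟨hf, hir, fun k hk => (Finset.mem_insert.mp hk).elim
      (fun e => by rw [e]; exact hj) (hK k)⟩
  · rintro ⟨hf, hir, hK⟩
    exact ⟨⟨hf, hir, fun k hk => hK k (Finset.mem_insert_of_mem hk)⟩,
      hK j (Finset.mem_insert_self j K)⟩

lemma xiStep_SSet_neg (P : Prof I S) (q : S → ℕ) (K : Finset I) (j : I)
    (h : ¬ ∃ μ ∈ EAMSSet P q K, μ j ≠ none) :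
    xiStep (EAMSSet P q K) j = EAMSSet P q K := by
  unfold xiStep
  rw [if_neg h]

lemma foldl_SSet (P : Prof I S) (q : S → ℕ) :
    ∀ (M : List I) (K : Finset I),
      ∃ K' : Finset I, K ⊆ K' ∧ List.foldl xiStep (EAMSSet P q K) M = EAMSSet P q K' := by
  intro M
  induction M with
  | nil => exact fun K => ⟨K, Finset.Subset.refl K, rfl⟩
  | cons j M ih =>
    intro K
    by_cases h : ∃ μ ∈ EAMSSet P q K, μ j ≠ none
    · obtain ⟨K', hsub, hfold⟩ := ih (insert j K)
      refine ⟨K', (Finset.subset_insert j K).trans hsub, ?_⟩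
      rw [List.foldl_cons, xiStep_SSet_pos P q K j h, hfold]
    · obtain ⟨K', hsub, hfold⟩ := ih K
      refine ⟨K', hsub, ?_⟩
      rw [List.foldl_cons, xiStep_SSet_neg P q K j h, hfold]

lemma foldl_SSet_pair (P Q : Prof I S) (q : S → ℕ) (i : I)
    (hPQ : ∀ j, j ≠ i → P j = Q j) :
    ∀ (M : List I), i ∉ M → ∀ K : Finset I, i ∉ K →
      ∃ K' : Finset I, K ⊆ K' ∧ i ∉ K' ∧
        List.foldl xiStep (EAMSSet P q K) M = EAMSSet P q K' ∧
        List.foldl xiStep (EAMSSet Q q K) M = EAMSSet Q q K' := by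
  intro M
  induction M with
  | nil => exact fun _ K hiK => ⟨K, Finset.Subset.refl K, hiK, rfl, rfl⟩
  | cons j M ih =>
    intro hiM K hiK
    have hji : j ≠ i := fun e => hiM (e ▸ List.mem_cons_self (a := j) (l := M))
    have hiM' : i ∉ M := fun h => hiM (List.mem_cons_of_mem j h)
    have hiff : (∃ μ ∈ EAMSSet P q K, μ j ≠ none) ↔ ∃ μ ∈ EAMSSet Q q K, μ j ≠ none := by
      constructor
      · rintro ⟨μ, hμ, hj⟩
        exact ⟨Function.update μ i none, mem_SSet_update_none hPQ hiK hμ,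
          by rwa [Function.update_of_ne hji]⟩
      · rintro ⟨μ, hμ, hj⟩
        exact ⟨Function.update μ i none,
          mem_SSet_update_none (fun j hj => (hPQ j hj).symm) hiK hμ,
          by rwa [Function.update_of_ne hji]⟩
    by_cases h : ∃ μ ∈ EAMSSet P q K, μ j ≠ none
    · obtain ⟨K', h1, h2, h3, h4⟩ := ih hiM' (insert j K)
        (by simp only [Finset.mem_insert, not_or]; exact ⟨fun e => hji e.symm, hiK⟩)
      refine ⟨K', (Finset.subset_insert j K).trans h1, h2, ?_, ?_⟩
      · rw [List.foldl_cons, xiStep_SSet_pos P q K j h, h3]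
      · rw [List.foldl_cons, xiStep_SSet_pos Q q K j (hiff.mp h), h4]
    · obtain ⟨K', h1, h2, h3, h4⟩ := ih hiM' K hiK
      refine ⟨K', h1, h2, ?_, ?_⟩
      · rw [List.foldl_cons, xiStep_SSet_neg P q K j h, h3]
      · rw [List.foldl_cons, xiStep_SSet_neg Q q K j (fun hq => h (hiff.mpr hq)), h4]

/-- The cyclic shift along an injective tuple of students. -/
noncomputable def shiftMap {n : ℕ} (a : Fin (n + 1) → I) : I → I := fun j =>
  if h : ∃ k, a k = j then a (h.choose + 1) else j

lemma shiftMap_apply {n : ℕ} {a : Fin (n + 1) → I} (hinj : Function.Injective a)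
    (k : Fin (n + 1)) : shiftMap a (a k) = a (k + 1) := by
  have h : ∃ k', a k' = a k := ⟨k, rfl⟩
  unfold shiftMap
  rw [dif_pos h]
  exact congrArg a (by rw [hinj h.choose_spec])

lemma shiftMap_apply_of_not {n : ℕ} {a : Fin (n + 1) → I} {j : I}
    (h : ¬ ∃ k, a k = j) : shiftMap a j = j := by
  unfold shiftMap
  rw [dif_neg h]

lemma shiftMap_injective {n : ℕ} {a : Fin (n + 1) → I}
    (hinj : Function.Injective a) : Function.Injective (shiftMap a) := by
  intro j j' h
  by_cases h1 : ∃ k, a k = j <;> by_cases h2 : ∃ k', a k' = j'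
  · obtain ⟨k, rfl⟩ := h1; obtain ⟨k', rfl⟩ := h2
    rw [shiftMap_apply hinj, shiftMap_apply hinj] at h
    exact congrArg a (add_right_cancel (hinj h))
  · obtain ⟨k, rfl⟩ := h1
    rw [shiftMap_apply hinj, shiftMap_apply_of_not h2] at h
    exact absurd ⟨k + 1, h⟩ h2
  · obtain ⟨k', rfl⟩ := h2
    rw [shiftMap_apply_of_not h1, shiftMap_apply hinj] at h
    exact absurd ⟨k' + 1, h.symm⟩ h1
  · rwa [shiftMap_apply_of_not h1, shiftMap_apply_of_not h2] at h

lemma chain_step {n : ℕ} {μ : Matching I S} {a : Fin (n + 1) → I} {t : Fin (n + 1) → S}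
    (h2 : ∀ k : Fin n, μ (a k.succ) = some (t k.castSucc)) :
    ∀ m : Fin (n + 1), m ≠ Fin.last n → μ (a (m + 1)) = some (t m) := by
  intro m hm
  have hlt : (m : ℕ) < n :=
    lt_of_le_of_ne (Nat.lt_succ_iff.mp m.isLt) (fun e => hm (Fin.ext e))
  have hmlt : m < Fin.last n := by
    rw [Fin.lt_def]; simpa using hlt
  have e1 : (m + 1) = (⟨(m : ℕ), hlt⟩ : Fin n).succ := by
    apply Fin.ext
    rw [Fin.val_add_one_of_lt hmlt]
    rfl
  have e2 : m = (⟨(m : ℕ), hlt⟩ : Fin n).castSucc := Fin.ext rfl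
  have hh := h2 ⟨(m : ℕ), hlt⟩
  rw [← e1, ← e2] at hh
  exact hh

lemma card_le_erase_add_one (s : Finset I) (v : I) :
    s.card ≤ (s.erase v).card + 1 := by
  by_cases hv : v ∈ s
  · have h1 : 1 ≤ s.card := Finset.card_pos.mpr ⟨v, hv⟩
    rw [Finset.card_erase_of_mem hv]; omega
  · rw [Finset.erase_eq_of_notMem hv]; omega

lemma chain_card_aux {n : ℕ} {μ μ' : Matching I S}
    {a : Fin (n + 1) → I} {t : Fin (n + 1) → S}
    (hinj : Function.Injective a)
    (hstep : ∀ m : Fin (n + 1), m ≠ Fin.last n → μ (a (m + 1)) = some (t m))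
    (hA : ∀ k, μ' (a k) = some (t k))
    (hB : ∀ j, (∀ k, j ≠ a k) → μ' j = μ j) (x : S) :
    ((univ.filter fun j => μ' j = some x).erase (a (Fin.last n))).card
      ≤ (univ.filter fun j => μ j = some x).card := by
  apply Finset.card_le_card_of_injOn (shiftMap a)
  · intro j hj
    rw [Finset.mem_coe, Finset.mem_erase] at hj
    obtain ⟨hjne, hj⟩ := hj
    rw [Finset.mem_filter] at hj; rw [Finset.mem_coe, Finset.mem_filter]
    refine ⟨Finset.mem_univ _, ?_⟩
    by_cases h : ∃ k, a k = j
    · obtain ⟨k, rfl⟩ := h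
      have hk : k ≠ Fin.last n := fun e => hjne (congrArg a e)
      rw [shiftMap_apply hinj, hstep k hk]
      exact (hA k).symm.trans hj.2
    · rw [shiftMap_apply_of_not h, ← hB j (fun k e => h ⟨k, e.symm⟩)]
      exact hj.2
  · exact fun x _ y _ h => shiftMap_injective hinj h

lemma cycle_card_aux {n : ℕ} {μ μ' : Matching I S}
    {a : Fin (n + 1) → I} {t : Fin (n + 1) → S}
    (hinj : Function.Injective a)
    (hC : ∀ k, μ (a k) = some (t k))
    (hA : ∀ k, μ' (a k) = some (t (k + 1)))
    (hB : ∀ j, (∀ k, j ≠ a k) → μ' j = μ j) (x : S) :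
    (univ.filter fun j => μ' j = some x).card
      ≤ (univ.filter fun j => μ j = some x).card := by
  apply Finset.card_le_card_of_injOn (shiftMap a)
  · intro j hj
    rw [Finset.mem_coe, Finset.mem_filter] at hj ⊢
    refine ⟨Finset.mem_univ _, ?_⟩
    by_cases h : ∃ k, a k = j
    · obtain ⟨k, rfl⟩ := h
      rw [shiftMap_apply hinj, hC (k + 1)]
      exact (hA k).symm.trans hj.2
    · rw [shiftMap_apply_of_not h, ← hB j (fun k e => h ⟨k, e.symm⟩)]
      exact hj.2
  · exact fun x _ y _ h => shiftMap_injective hinj h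

lemma implementStep_preserves {P : Prof I S} {q : S → ℕ} {μ μ' : Matching I S}
    (h : ImplementStep P q μ μ') (hf : Feasible q μ) (hir : IndivRational P μ) :
    Feasible q μ' ∧ IndivRational P μ' ∧ ∀ j, μ j ≠ none → μ' j ≠ none := by
  rcases h with ⟨n, a, t, ⟨hinj, hpref, h2, hlast⟩, hA, hB⟩ |
    ⟨n, a, t, ⟨hinj, hC, hpref⟩, hA, hB⟩
  · have hstep := chain_step h2
    refine ⟨?_, ?_, ?_⟩
    · intro x
      by_cases hx : x = t (Fin.last n)
      · subst hx
        calc (univ.filter fun j => μ' j = some (t (Fin.last n))).card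
            ≤ ((univ.filter fun j => μ' j = some (t (Fin.last n))).erase
                (a (Fin.last n))).card + 1 := card_le_erase_add_one _ _
          _ ≤ (univ.filter fun j => μ j = some (t (Fin.last n))).card + 1 :=
              Nat.add_le_add_right (chain_card_aux hinj hstep hA hB _) 1
          _ ≤ q (t (Fin.last n)) := hlast
      · have herase : (univ.filter fun j => μ' j = some x).erase (a (Fin.last n))
            = univ.filter fun j => μ' j = some x := by
          apply Finset.erase_eq_of_notMem
          rw [Finset.mem_filter]
          rintro ⟨-, hmem⟩
          rw [hA (Fin.last n)] at hmem
          exact hx (Option.some.inj hmem).symm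
        have hc := chain_card_aux hinj hstep hA hB x
        rw [herase] at hc
        exact hc.trans (hf x)
    · intro j
      by_cases h : ∃ k, a k = j
      · obtain ⟨k, rfl⟩ := h
        rw [hA k]
        exact (hir (a k)).trans (le_of_lt (hpref k))
      · rw [hB j (fun k e => h ⟨k, e.symm⟩)]; exact hir j
    · intro j hj
      by_cases h : ∃ k, a k = j
      · obtain ⟨k, rfl⟩ := h; rw [hA k]; simp
      · rw [hB j (fun k e => h ⟨k, e.symm⟩)]; exact hj
  · refine ⟨fun x => (cycle_card_aux hinj hC hA hB x).trans (hf x), ?_, ?_⟩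
    · intro j
      by_cases h : ∃ k, a k = j
      · obtain ⟨k, rfl⟩ := h
        rw [hA k]
        have hh := hir (a k)
        rw [hC k] at hh
        exact hh.trans (le_of_lt (hpref k))
      · rw [hB j (fun k e => h ⟨k, e.symm⟩)]; exact hir j
    · intro j hj
      by_cases h : ∃ k, a k = j
      · obtain ⟨k, rfl⟩ := h; rw [hA k]; simp
      · rw [hB j (fun k e => h ⟨k, e.symm⟩)]; exact hj

lemma rtg_preserves {P : Prof I S} {q : S → ℕ} {μ₀ μ : Matching I S}
    (h : Relation.ReflTransGen (ImplementStep P q) μ₀ μ)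
    (hf : Feasible q μ₀) (hir : IndivRational P μ₀) :
    Feasible q μ ∧ IndivRational P μ ∧ ∀ j, μ₀ j ≠ none → μ j ≠ none := by
  induction h with
  | refl => exact ⟨hf, hir, fun _ hj => hj⟩
  | tail hsteps hstep ih =>
    obtain ⟨hf', hir', hass'⟩ := ih
    obtain ⟨hf'', hir'', hass''⟩ := implementStep_preserves hstep hf' hir'
    exact ⟨hf'', hir'', fun j hj => hass'' j (hass' j hj)⟩


/-- if an individually rational mechanism φ assigns more
students than an EAM mechanism ψ at equilibria P'' and P' respectively,
then some student strictly prefers (truly) their ψ-equilibrium assignment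
to their φ-equilibrium assignment, which is itself acceptable. -/
theorem EAM_size_lemma
    (q : S → ℕ) (L : List I) (hnd : L.Nodup) (hcomp : ∀ i : I, i ∈ L)
    (ψ φ : Mechanism I S) (hψ : IsEAMMech q L ψ) (hφ : IRMech q φ)
    (u P' P'' : Prof I S)
    (h1 : NashEq u ψ P') (h2 : NashEq u φ P'')
    (hs : msize (ψ P') < msize (φ P'')) :
    ∃ i : I, (u i).1 (φ P'' i) < (u i).1 (ψ P' i) ∧
      (u i).1 none < (u i).1 (φ P'' i) := by
  classical
  have hφfeas := (hφ P'').1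
  have hsum := hs
  rw [msize_eq_sum, msize_eq_sum] at hsum
  obtain ⟨s, -, hslt⟩ := Finset.exists_lt_of_sum_lt hsum
  have hsq : (univ.filter fun j => ψ P' j = some s).card < q s :=
    lt_of_lt_of_le hslt (hφfeas s)
  have hex : ∃ i, φ P'' i = some s ∧ ψ P' i ≠ some s := by
    by_contra hno
    push_neg at hno
    have hsub : (univ.filter fun j => φ P'' j = some s)
        ⊆ univ.filter fun j => ψ P' j = some s := by
      intro j hj
      rw [Finset.mem_filter] at hj ⊢
      exact ⟨Finset.mem_univ _, hno j hj.2⟩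
    exact absurd (Finset.card_le_card hsub) (not_le.mpr hslt)
  obtain ⟨i, hφi, hμi⟩ := hex
  -- the φ-assignment of i is truly acceptable
  have hIRi : (u i).1 none < (u i).1 (φ P'' i) := by
    have hnone : φ (Function.update P'' i nonePref) i = none := by
      have hir := (hφ (Function.update P'' i nonePref)).2 i
      rw [Function.update_self] at hir
      cases hv : φ (Function.update P'' i nonePref) i with
      | none => rfl
      | some c =>
        rw [hv] at hir
        exact absurd hir (not_le.mpr (nonePref_lt c))
    have hnash := h2 i nonePref
    rw [hnone] at hnash
    rcases lt_or_eq_of_le hnash with hlt | heq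
    · exact hlt
    · exfalso
      have he := (u i).2 heq
      rw [hφi] at he
      exact Option.some_ne_none s he.symm
  by_contra hcon
  push_neg at hcon
  have hψle : (u i).1 (ψ P' i) ≤ (u i).1 (φ P'' i) := by
    by_contra hgt
    push_neg at hgt
    exact absurd (hcon i hgt) (not_le.mpr hIRi)
  have hui : (u i).1 (ψ P' i) < (u i).1 (some s) := by
    rw [hφi] at hψle
    rcases lt_or_eq_of_le hψle with hlt | heq
    · exact hlt
    · exact absurd ((u i).2 heq) hμi
  -- EAM runs for the true profile of reports and for the deviation
  obtain ⟨μ₀, hμ₀mem, hμ₀steps, -, -⟩ := hψ P'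
  set Pd := Function.update P' i (onlyPref s) with hPd
  obtain ⟨ν₀, hν₀mem, hν₀steps, -, -⟩ := hψ Pd
  obtain ⟨L₁, L₂, hL⟩ := List.append_of_mem (hcomp i)
  subst hL
  rw [List.nodup_append] at hnd
  obtain ⟨-, hndR, hdisj⟩ := hnd
  have hiL₁ : i ∉ L₁ := fun h => hdisj i h i List.mem_cons_self rfl
  have hPQ : ∀ j, j ≠ i → P' j = Pd j := fun j hj => by
    rw [hPd, Function.update_of_ne hj]
  obtain ⟨K₁, -, hiK₁, hfoldP, hfoldQ⟩ :=
    foldl_SSet_pair P' Pd q i hPQ L₁ hiL₁ ∅ (Finset.notMem_empty i)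
  have hxiP : xiList P' q (L₁ ++ i :: L₂)
      = List.foldl xiStep (EAMSSet P' q K₁) (i :: L₂) := by
    unfold xiList
    rw [SSet_empty, List.foldl_append, hfoldP]
  have hxiQ : xiList Pd q (L₁ ++ i :: L₂)
      = List.foldl xiStep (EAMSSet Pd q K₁) (i :: L₂) := by
    unfold xiList
    rw [SSet_empty, List.foldl_append, hfoldQ]
  obtain ⟨Kf, hK₁Kf, hfoldPf⟩ := foldl_SSet P' q (i :: L₂) K₁
  rw [hfoldPf] at hxiP
  have hμ₀S : μ₀ ∈ EAMSSet P' q Kf := by rw [← hxiP]; exact hμ₀mem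
  obtain ⟨hμ₀f, hμ₀ir, hμ₀K⟩ := hμ₀S
  obtain ⟨hμf, hμir, hμass⟩ := rtg_preserves hμ₀steps hμ₀f hμ₀ir
  -- student i is selected in the first stage of the deviated run
  have hw : ∃ w ∈ EAMSSet Pd q K₁, w i ≠ none := by
    refine ⟨Function.update (ψ P') i (some s), ⟨?_, ?_, ?_⟩,
      by rw [Function.update_self]; simp⟩
    · intro c
      by_cases hc : c = s
      · rw [hc]
        have hsub : (univ.filter fun j => Function.update (ψ P') i (some s) j = some s)
            ⊆ insert i (univ.filter fun j => ψ P' j = some s) := by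
          intro j hj
          rw [Finset.mem_filter] at hj
          rcases eq_or_ne j i with rfl | hne
          · exact Finset.mem_insert_self _ _
          · rw [Function.update_of_ne hne] at hj
            exact Finset.mem_insert_of_mem (Finset.mem_filter.mpr ⟨Finset.mem_univ _, hj.2⟩)
        calc (univ.filter fun j => Function.update (ψ P') i (some s) j = some s).card
            ≤ (insert i (univ.filter fun j => ψ P' j = some s)).card :=
              Finset.card_le_card hsub
          _ ≤ (univ.filter fun j => ψ P' j = some s).card + 1 := Finset.card_insert_le _ _
          _ ≤ q s := hsq
      · refine le_trans (Finset.card_le_card ?_) (hμf c)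
        intro j hj
        rw [Finset.mem_filter] at hj ⊢
        refine ⟨Finset.mem_univ _, ?_⟩
        rcases eq_or_ne j i with rfl | hne
        · rw [Function.update_self] at hj
          exact absurd (Option.some.inj hj.2).symm hc
        · rw [Function.update_of_ne hne] at hj
          exact hj.2
    · intro j
      rcases eq_or_ne j i with rfl | hne
      · simp only [hPd, Function.update_self]
        exact le_of_lt (onlyPref_none_lt s)
      · rw [Function.update_of_ne hne, hPd, Function.update_of_ne hne]
        exact hμir j
    · intro k hk
      have hki : k ≠ i := fun e => hiK₁ (e ▸ hk)
      rw [Function.update_of_ne hki]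
      exact hμass k (hμ₀K k (hK₁Kf hk))
  have hstep_i : xiStep (EAMSSet Pd q K₁) i = EAMSSet Pd q (insert i K₁) :=
    xiStep_SSet_pos Pd q K₁ i hw
  obtain ⟨K₂, hK₂sub, hfoldQf⟩ := foldl_SSet Pd q L₂ (insert i K₁)
  have hxiQ2 : xiList Pd q (L₁ ++ i :: L₂) = EAMSSet Pd q K₂ := by
    rw [hxiQ, List.foldl_cons, hstep_i, hfoldQf]
  have hν₀S : ν₀ ∈ EAMSSet Pd q K₂ := by rw [← hxiQ2]; exact hν₀mem
  obtain ⟨hν₀f, hν₀ir, hν₀K⟩ := hν₀S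
  have hν₀i : ν₀ i ≠ none := hν₀K i (hK₂sub (Finset.mem_insert_self i K₁))
  obtain ⟨-, hνir, hνass⟩ := rtg_preserves hν₀steps hν₀f hν₀ir
  have hνi : ψ Pd i ≠ none := hνass i hν₀i
  have hνs : ψ Pd i = some s := by
    cases hv : ψ Pd i with
    | none => exact absurd hv hνi
    | some c =>
      have hir := hνir i
      rw [hv, hPd, Function.update_self] at hir
      by_cases hcs : c = s
      · rw [hcs]
      · exact absurd hir (not_le.mpr (onlyPref_other_lt s c hcs))
  have hnash := h1 i (onlyPref s)
  rw [← hPd, hνs] at hnash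
  exact absurd hnash (not_le.mpr hui)
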